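/- Let a, b > 0, τ := min{2b/a, 2a^{1/2}/b, 2a^{3/2}/b}, α_τ := 2 a^{-1/2} b τ^{-2}, β_τ := a^{1/2} − 2 a^{-1/2} b τ^{-1}, and define f_τ(r) := ½ α_τ r² + β_τ r for 0 < r ≤ τ and f_τ(r) := a^{1/2} r − a^{-1/2} b for r ≥ τ. Then f_τ is globally C¹ on ℝ_{>0}, convex, C² on ℝ_{>0} \ {τ}, satisfies 2 f_τ''(r) − f_τ(r) f_τ'(r) + a r − b ≥ 0 for every r ∈ ℝ_{>0} \ {τ}, and lim_{r↓0} r^{-1} f_τ(r) = β_τ ≥ min{0, a^{1/2} − a^{-1} b², a^{1/2} − a^{-2} b²}. -/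

import Mathlib

open Real Set Filter

theorem keyG_aux (m n u : ℝ) (hm0 : 0 ≤ m) (hmn : m ≤ 2*n) (hn : n ≤ 2) (hu0 : 0 ≤ u)
    (hu1 : u ≤ 1) :
    0 ≤ 4 - m*(1-u)*(1-3*u) - 2*n*u*(1-u)*(2-u) := by
  rcases le_or_gt u (1/3) with h | h
  · nlinarith [mul_nonneg hu0 (sub_nonneg.2 hu1), mul_nonneg (mul_nonneg hu0 hu0) (sub_nonneg.2 hu1), sq_nonneg u, mul_nonneg hu0 hu0]
  · nlinarith [mul_nonneg hu0 (sub_nonneg.2 hu1), mul_nonneg (mul_nonneg hu0 hu0) (sub_nonneg.2 hu1), mul_nonneg (sub_nonneg.2 hu1) (sub_nonneg.2 hu1)]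

theorem keyP_aux (s c t r : ℝ) (hs : 0 < s) (hc : 0 < c) (ht : 0 < t) (hr : 0 ≤ r) (hrt : r ≤ t)
    (h1 : s*t ≤ 2*c) (h2 : c*t ≤ 2) :
    0 ≤ t^2*(4 - s*t^2) + 4*(s*t-c)*t^2*r + 3*(2*c-s*t)*t*r^2 - 2*c*r^3 := by
  have hm0 : 0 ≤ s*t^2 := by positivity
  have hmn : s*t^2 ≤ 2*(c*t) := by nlinarith
  have hu0 : 0 ≤ r/t := by positivity
  have hu1 : r/t ≤ 1 := (div_le_one ht).2 hrt
  have hG := keyG_aux (s*t^2) (c*t) (r/t) hm0 hmn h2 hu0 hu1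
  have h2' := mul_nonneg (le_of_lt (pow_pos ht 2)) hG
  have heq : t^2 * (4 - s*t^2*(1-r/t)*(1-3*(r/t)) - 2*(c*t)*(r/t)*(1-r/t)*(2-r/t))
      = t^2*(4 - s*t^2) + 4*(s*t-c)*t^2*r + 3*(2*c-s*t)*t*r^2 - 2*c*r^3 := by
    field_simp
    ring
  linarith [heq ▸ h2']

/-- The concatenated profile: the tangent parabola on `(0, τ]` and the linear profile on
`[τ, ∞)`. -/
noncomputable def concatProfile (a b τ ατ βτ : ℝ) (r : ℝ) : ℝ :=
  if r ≤ τ then ατ / 2 * r ^ 2 + βτ * r else Real.sqrt a * r - b / Real.sqrt a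

set_option maxHeartbeats 1000000 in
/-- the concatenated profile `f_τ` is `C¹` on `ℝ_{>0}`, convex, `C²` away from
`τ`, satisfies the stationary profile inequality `2 f_τ'' - f_τ f_τ' + a r - b ≥ 0` on
`ℝ_{>0} \ {τ}`, and `r⁻¹ f_τ(r) → β_τ ≥ min{0, a^{1/2} - a⁻¹b², a^{1/2} - a⁻²b²}` as `r ↓ 0`. -/
theorem stmt15 (a b : ℝ) (ha : 0 < a) (hb : 0 < b)
    (τ ατ βτ : ℝ)
    (hτ : τ = min (2 * b / a) (min (2 * Real.sqrt a / b) (2 * (a * Real.sqrt a) / b)))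
    (hατ : ατ = 2 * (b / Real.sqrt a) * τ⁻¹ ^ 2)
    (hβτ : βτ = Real.sqrt a - 2 * (b / Real.sqrt a) * τ⁻¹) :
    (∀ r ∈ Set.Ioi (0 : ℝ), DifferentiableAt ℝ (concatProfile a b τ ατ βτ) r) ∧
    ContinuousOn (deriv (concatProfile a b τ ατ βτ)) (Set.Ioi 0) ∧
    ConvexOn ℝ (Set.Ioi 0) (concatProfile a b τ ατ βτ) ∧
    (∀ r ∈ Set.Ioi (0 : ℝ), r ≠ τ → DifferentiableAt ℝ (deriv (concatProfile a b τ ατ βτ)) r) ∧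
    (∀ r ∈ Set.Ioi (0 : ℝ), r ≠ τ →
      2 * deriv (deriv (concatProfile a b τ ατ βτ)) r
          - concatProfile a b τ ατ βτ r * deriv (concatProfile a b τ ατ βτ) r + a * r - b ≥ 0) ∧
    Filter.Tendsto (fun r => concatProfile a b τ ατ βτ r / r)
      (nhdsWithin 0 (Set.Ioi 0)) (nhds βτ) ∧
    βτ ≥ min 0 (min (Real.sqrt a - b ^ 2 / a) (Real.sqrt a - b ^ 2 / a ^ 2)) := by
  obtain ⟨s, hs, hsa⟩ : ∃ s, 0 < s ∧ s * s = a :=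
    ⟨Real.sqrt a, Real.sqrt_pos.2 ha, Real.mul_self_sqrt ha.le⟩
  have hsqrt : Real.sqrt a = s := by rw [← hsa, Real.sqrt_mul_self hs.le]
  rw [hsqrt] at hτ hατ hβτ
  have hτ0 : 0 < τ := by rw [hτ]; positivity
  have hτn : τ ≠ 0 := ne_of_gt hτ0
  have hατ0 : 0 ≤ ατ := by rw [hατ]; positivity
  -- tangency identities
  have hslope : ατ * τ + βτ = s := by rw [hατ, hβτ]; field_simp; ring
  have hval : ατ/2 * τ^2 + βτ * τ = s * τ - b / s := by rw [hατ, hβτ]; field_simp; ring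
  -- bounds on τ
  have ht1 : s * τ ≤ 2 * (b / s) := by
    have h := hτ ▸ min_le_left (2*b/a) (min (2*s/b) (2*(a*s)/b))
    calc s * τ ≤ s * (2*b/a) := by nlinarith
      _ = 2*(b/s) := by rw [← hsa]; field_simp
  have ht2 : (b/s) * τ ≤ 2 := by
    have h : τ ≤ 2*s/b := hτ ▸ le_trans (min_le_right _ _) (min_le_left _ _)
    calc (b/s)*τ ≤ (b/s)*(2*s/b) := mul_le_mul_of_nonneg_left h (by positivity)
      _ = 2 := by field_simp
  set f := concatProfile a b τ ατ βτ with hf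
  have hfP : ∀ x, x ≤ τ → f x = ατ/2 * x^2 + βτ * x := fun x hx => by
    simp [hf, concatProfile, hx]
  have hfL : ∀ x, τ ≤ x → f x = s * x - b / s := fun x hx => by
    rcases eq_or_lt_of_le hx with he | hl
    · rw [hfP x he.symm.le, ← he]; linarith [hval]
    · simp [hf, concatProfile, not_le.2 hl, hsqrt]
  have hP : ∀ x : ℝ, HasDerivAt (fun y => ατ/2 * y^2 + βτ * y) (ατ * x + βτ) x := by
    intro x
    have h1 := ((hasDerivAt_pow 2 x).const_mul (ατ/2)).add ((hasDerivAt_id x).const_mul βτ)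
    rw [show ατ * x + βτ = ατ / 2 * (((2:ℕ):ℝ) * x ^ (2 - 1)) + βτ * 1 by push_cast; ring]; exact h1
  have hL : ∀ x : ℝ, HasDerivAt (fun y => s * y - b / s) s x := by
    intro x
    simpa using ((hasDerivAt_id x).const_mul s).sub_const (b / s)
  have hder : ∀ r : ℝ, HasDerivAt f (ατ * min r τ + βτ) r := by
    intro r
    rcases lt_trichotomy r τ with h | h | h
    · rw [min_eq_left h.le]
      exact (hP r).congr_of_eventuallyEq <|
        Filter.eventuallyEq_of_mem (Iio_mem_nhds h) fun x hx => hfP x (le_of_lt hx)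
    · subst h
      rw [min_self, hslope]
      have h1 : HasDerivWithinAt f s (Iic r) r := by
        have := ((hP r).hasDerivWithinAt (s := Iic r)).congr
          (fun x hx => hfP x hx) (hfP r le_rfl)
        rwa [hslope] at this
      have h2 : HasDerivWithinAt f s (Ici r) r :=
        ((hL r).hasDerivWithinAt (s := Ici r)).congr (fun x hx => hfL x hx) (hfL r le_rfl)
      have h3 := h1.union h2
      rw [Iic_union_Ici] at h3
      rwa [hasDerivWithinAt_univ] at h3
    · rw [min_eq_right h.le, hslope]
      exact (hL r).congr_of_eventuallyEq <|
        Filter.eventuallyEq_of_mem (Ioi_mem_nhds h) fun x hx => hfL x (le_of_lt hx)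
  have hderiv_eq : deriv f = fun r => ατ * min r τ + βτ := funext fun r => (hder r).deriv
  -- second derivative away from τ
  have hder2 : ∀ r : ℝ, r ≠ τ → HasDerivAt (deriv f) (if r < τ then ατ else 0) r := by
    intro r hne
    rcases hne.lt_or_gt with h | h
    · rw [if_pos h, hderiv_eq]
      have hg : HasDerivAt (fun y : ℝ => ατ * y + βτ) ατ r := by
        simpa using ((hasDerivAt_id r).const_mul ατ).add_const βτ
      exact hg.congr_of_eventuallyEq <|
        Filter.eventuallyEq_of_mem (Iio_mem_nhds h) fun x hx => by
          rw [min_eq_left (le_of_lt (show x < τ from hx))]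
    · rw [if_neg (not_lt.2 h.le), hderiv_eq]
      exact (hasDerivAt_const r (ατ * τ + βτ)).congr_of_eventuallyEq <|
        Filter.eventuallyEq_of_mem (Ioi_mem_nhds h) fun x hx => by
          rw [min_eq_right (le_of_lt (show τ < x from hx))]
  refine ⟨fun r _ => (hder r).differentiableAt, ?_, ?_, fun r _ hne => (hder2 r hne).differentiableAt, ?_, ?_, ?_⟩
  · rw [hderiv_eq]
    exact ((continuous_const.mul (continuous_id.min continuous_const)).add
      continuous_const).continuousOn
  · refine MonotoneOn.convexOn_of_deriv (convex_Ioi 0)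
      (fun x _ => (hder x).differentiableAt.continuousAt.continuousWithinAt)
      (fun x _ => (hder x).differentiableAt.differentiableWithinAt) ?_
    rw [hderiv_eq]
    intro x _ y _ hxy
    have : min x τ ≤ min y τ := min_le_min hxy le_rfl
    dsimp only
    nlinarith
  · -- the stationary profile inequality
    intro r hr hne
    have hr0 : (0:ℝ) < r := hr
    have e1 : deriv (deriv f) r = if r < τ then ατ else 0 := (hder2 r hne).deriv
    have e2 : deriv f r = ατ * min r τ + βτ := by rw [hderiv_eq]
    rcases hne.lt_or_gt with h | h
    · -- parabola region
      rw [e1, if_pos h, e2, min_eq_left h.le, hfP r h.le]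
      have hkey := keyP_aux s (b/s) τ r hs (by positivity) hτ0 hr0.le h.le ht1 ht2
      have hQ : 2 * ατ - (ατ/2*r^2 + βτ*r) * (ατ*r + βτ) + a*r - b
          = (b/s) * (τ^2*(4 - s*τ^2) + 4*(s*τ-b/s)*τ^2*r + 3*(2*(b/s)-s*τ)*τ*r^2
              - 2*(b/s)*r^3) / τ^4 := by
        rw [hατ, hβτ, ← hsa]
        field_simp
        ring
      rw [hQ]
      exact div_nonneg (mul_nonneg (by positivity) hkey) (by positivity)
    · -- linear region
      rw [e1, if_neg (not_lt.2 h.le), e2, min_eq_right h.le, hslope, hfL r h.le]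
      have : (s*r - b/s) * s = a*r - b := by
        rw [← hsa]; field_simp
      nlinarith [this]
  · -- the limit at 0
    have hev : ∀ᶠ r in nhdsWithin (0:ℝ) (Set.Ioi 0), ατ/2 * r + βτ = f r / r := by
      filter_upwards [Ioo_mem_nhdsGT_of_mem (Set.left_mem_Ico.2 hτ0)] with r hr
      have hrne : r ≠ 0 := ne_of_gt hr.1
      rw [hfP r hr.2.le]
      field_simp
    refine Filter.Tendsto.congr' hev ?_
    have : Filter.Tendsto (fun r : ℝ => ατ/2 * r + βτ) (nhds 0) (nhds (ατ/2 * 0 + βτ)) :=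
      ((continuous_const.mul continuous_id).add continuous_const).tendsto 0
    simpa using this.mono_left nhdsWithin_le_nhds
  · -- lower bound on βτ
    rw [hβτ, hτ]
    rcases le_total (2*b/a) (min (2*s/b) (2*(a*s)/b)) with h | h
    · rw [min_eq_left h]
      have : s - 2*(b/s)*(2*b/a)⁻¹ = 0 := by
        rw [← hsa]; field_simp; ring
      rw [this]
      exact min_le_left _ _
    · rw [min_eq_right h]
      rcases le_total (2*s/b) (2*(a*s)/b) with h2 | h2
      · rw [min_eq_left h2]
        have : s - 2*(b/s)*(2*s/b)⁻¹ = Real.sqrt a - b^2/a := by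
          rw [hsqrt, ← hsa]; field_simp
        rw [this]
        exact le_trans (min_le_right _ _) (min_le_left _ _)
      · rw [min_eq_right h2]
        have : s - 2*(b/s)*(2*(a*s)/b)⁻¹ = Real.sqrt a - b^2/a^2 := by
          rw [hsqrt, ← hsa]; field_simp
        rw [this]
        exact le_trans (min_le_right _ _) (min_le_right _ _)
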